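/- arXiv:2412.13956 — 5 statements merged into one kernel-verified Lean document; each statement's English description precedes it below -/
import Mathlib

section
/- Let C be a weak coring in a symmetric monoidal closed category 𝒞, with counit ε : C ⟶ 𝟙 and comultiplication Δ : C ⟶ C ⊗ C. Then for every object t of 𝒞, if C ⊗ t is a zero object, then the internal hom (ihom C).obj t is a zero object. -/
open CategoryTheory CategoryTheory.Limits CategoryTheory.MonoidalCategory

theorem weak_coring_tensor_zero_implies_ihom_zero
    {𝒞 : Type*} [Category 𝒞] [MonoidalCategory 𝒞] [SymmetricCategory 𝒞] [MonoidalClosed 𝒞]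
    (C : 𝒞) (ε : C ⟶ 𝟙_ 𝒞) (Δ : C ⟶ C ⊗ C)
    (hΔ : Δ ≫ (C ◁ ε) ≫ (ρ_ C).hom = 𝟙 C)
    (t : 𝒞) (ht : IsZero (C ⊗ t)) :
    IsZero ((ihom C).obj t) := by
  have hΔ' : Δ ≫ (β_ C C).hom ≫ (ε ▷ C) ≫ (λ_ C).hom = 𝟙 C := by
    rw [← hΔ]
    congr 1
    rw [← BraidedCategory.braiding_naturality_right_assoc, braiding_leftUnitor]
  have key : ∀ (X : 𝒞) (f g : C ⊗ X ⟶ t), f = g := by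
    intro X f g
    have hf : ∀ f : C ⊗ X ⟶ t,
        f = ((Δ ≫ (β_ C C).hom) ▷ X) ≫ (α_ C C X).hom ≫ (C ◁ f) ≫ (ε ▷ t) ≫ (λ_ t).hom := by
      intro f
      rw [whisker_exchange_assoc, leftUnitor_naturality]
      slice_rhs 2 3 => rw [← associator_naturality_left]
      rw [leftUnitor_tensor_hom]
      simp only [Category.assoc, Iso.hom_inv_id_assoc]
      slice_rhs 1 3 => rw [← comp_whiskerRight, ← comp_whiskerRight, Category.assoc, hΔ']
      simp
    rw [hf f, hf g, ht.eq_of_tgt (C ◁ f) (C ◁ g)]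
  have hhom : ∀ (X : 𝒞) (g g' : X ⟶ (ihom C).obj t), g = g' := by
    intro X g g'
    rw [← MonoidalClosed.curry_uncurry g, ← MonoidalClosed.curry_uncurry g',
      key X (MonoidalClosed.uncurry g) (MonoidalClosed.uncurry g')]
  have e : (ihom C).obj t ≅ C ⊗ t :=
    { hom := ht.from_ _
      inv := ht.to_ _
      hom_inv_id := hhom _ _ _
      inv_hom_id := ht.eq_of_src _ _ }
  exact ht.of_iso e
end

section
/- Let R be a weak ring in a symmetric monoidal closed category 𝒞, with unit η : 𝟙 ⟶ R and multiplication μ : R ⊗ R ⟶ R. Then for every object t of 𝒞, if t ⊗ R is a zero object, then the internal hom (ihom t).obj R is a zero object. -/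
open CategoryTheory CategoryTheory.Limits CategoryTheory.MonoidalCategory

theorem weak_ring_tensor_zero_implies_ihom_zero
    {𝒞 : Type*} [Category 𝒞] [MonoidalCategory 𝒞] [SymmetricCategory 𝒞] [MonoidalClosed 𝒞]
    (R : 𝒞) (η : 𝟙_ 𝒞 ⟶ R) (μ : R ⊗ R ⟶ R)
    (hμ : (ρ_ R).inv ≫ (R ◁ η) ≫ μ = 𝟙 R)
    (t : 𝒞) (ht : IsZero (t ⊗ R)) :
    IsZero ((ihom t).obj R) := by
  -- Maps out of `Y ⊗ (t ⊗ R)` are unique (tensorLeft Y is a left adjoint, t ⊗ R is zero).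
  have hout : ∀ (Y W : 𝒞) (u v : Y ⊗ (t ⊗ R) ⟶ W), u = v := by
    intro Y W u v
    have h : MonoidalClosed.curry u = MonoidalClosed.curry v := ht.eq_of_src _ _
    calc u = MonoidalClosed.uncurry (MonoidalClosed.curry u) :=
            (MonoidalClosed.uncurry_curry u).symm
      _ = MonoidalClosed.uncurry (MonoidalClosed.curry v) := by rw [h]
      _ = v := MonoidalClosed.uncurry_curry v
  -- Key: any two maps `t ⊗ Y ⟶ R` are equal.
  have key : ∀ (Y : 𝒞) (f g : t ⊗ Y ⟶ R), f = g := by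
    intro Y f g
    have factor : ∀ f : t ⊗ Y ⟶ R,
        f = ((ρ_ (t ⊗ Y)).inv ≫ ((t ⊗ Y) ◁ η) ≫ ((β_ t Y).hom ▷ R) ≫ (α_ Y t R).hom) ≫
            ((α_ Y t R).inv ≫ ((β_ t Y).inv ▷ R) ≫ (f ▷ R) ≫ μ) := by
      intro f
      have h1 : (t ⊗ Y) ◁ η ≫ f ▷ R = f ▷ 𝟙_ 𝒞 ≫ R ◁ η := whisker_exchange f η
      simp only [Category.assoc, Iso.hom_inv_id_assoc, hom_inv_whiskerRight_assoc]
      rw [reassoc_of% h1]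
      rw [← rightUnitor_inv_naturality_assoc, hμ, Category.comp_id]
    rw [factor f, factor g]
    congr 1
    exact hout Y R _ _
  refine ⟨fun W => ⟨⟨⟨?_⟩, ?_⟩⟩, fun Y => ⟨⟨⟨?_⟩, ?_⟩⟩⟩
  · -- a map (ihom t).obj R ⟶ W
    exact ht.from_ ((ihom t).obj R) ≫ ht.to_ W
  · -- uniqueness of maps out
    intro u
    set k : t ⊗ (t ⊗ R) ⟶ R := ht.from_ (t ⊗ (t ⊗ R)) ≫ ht.to_ R with hk
    have hid : 𝟙 ((ihom t).obj R) =
        ht.from_ ((ihom t).obj R) ≫ MonoidalClosed.curry k := by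
      have h2 : MonoidalClosed.uncurry (𝟙 ((ihom t).obj R)) =
          (t ◁ ht.from_ ((ihom t).obj R)) ≫ k := key _ _ _
      calc 𝟙 ((ihom t).obj R)
          = MonoidalClosed.curry (MonoidalClosed.uncurry (𝟙 ((ihom t).obj R))) :=
            (MonoidalClosed.curry_uncurry _).symm
        _ = MonoidalClosed.curry ((t ◁ ht.from_ ((ihom t).obj R)) ≫ k) := by rw [h2]
        _ = ht.from_ ((ihom t).obj R) ≫ MonoidalClosed.curry k :=
            MonoidalClosed.curry_natural_left _ _
    have huniv : ∀ u : (ihom t).obj R ⟶ W,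
        u = ht.from_ ((ihom t).obj R) ≫ MonoidalClosed.curry k ≫ u := by
      intro u
      conv_lhs => rw [← Category.id_comp u, hid, Category.assoc]
    show u = ht.from_ ((ihom t).obj R) ≫ ht.to_ W
    rw [huniv u, huniv (ht.from_ ((ihom t).obj R) ≫ ht.to_ W)]
    congr 1
    exact ht.eq_of_src _ _
  · -- a map Y ⟶ (ihom t).obj R
    exact MonoidalClosed.curry (ht.from_ (t ⊗ Y) ≫ ht.to_ R)
  · -- uniqueness of maps in
    intro u
    show u = MonoidalClosed.curry (ht.from_ (t ⊗ Y) ≫ ht.to_ R)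
    rw [← MonoidalClosed.curry_uncurry u]
    congr 1
    exact key _ _ _
end

section
/- Let C be a weak coring in a symmetric monoidal closed category 𝒞, with counit ε : C ⟶ 𝟙 and comultiplication Δ : C ⟶ C ⊗ C. Then for every object t of 𝒞, if the internal hom (ihom C).obj t is a zero object, then C ⊗ t is a zero object. -/
open CategoryTheory CategoryTheory.Limits CategoryTheory.MonoidalCategory

/-- An object admitting a retraction through a zero object is itself zero. -/
private lemma isZero_of_retract_zero {𝒞 : Type*} [Category 𝒞] {X Z : 𝒞} (hZ : IsZero Z)
    (s : X ⟶ Z) (p : Z ⟶ X) (h : s ≫ p = 𝟙 X) : IsZero X := by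
  constructor
  · intro Y
    refine ⟨⟨⟨s ≫ hZ.to_ Y⟩, fun f => ?_⟩⟩
    calc f = (s ≫ p) ≫ f := by rw [h, Category.id_comp]
    _ = s ≫ (p ≫ f) := by rw [Category.assoc]
    _ = s ≫ hZ.to_ Y := by rw [hZ.eq_of_src (p ≫ f) (hZ.to_ Y)]
  · intro Y
    refine ⟨⟨⟨hZ.from_ Y ≫ p⟩, fun f => ?_⟩⟩
    calc f = f ≫ (s ≫ p) := by rw [h, Category.comp_id]
    _ = (f ≫ s) ≫ p := by rw [← Category.assoc]
    _ = hZ.from_ Y ≫ p := by rw [hZ.eq_of_tgt (f ≫ s) (hZ.from_ Y)]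

/-- In a monoidal closed category, tensoring a zero object on the left by any object
gives a zero object. -/
private lemma isZero_tensor_left {𝒞 : Type*} [Category 𝒞] [MonoidalCategory 𝒞]
    [MonoidalClosed 𝒞] (C : 𝒞) {Z : 𝒞} (hZ : IsZero Z) : IsZero (C ⊗ Z) := by
  refine isZero_of_retract_zero hZ (hZ.from_ (C ⊗ Z)) (hZ.to_ (C ⊗ Z)) ?_
  apply MonoidalClosed.curry_injective
  exact hZ.eq_of_src _ _

theorem weak_coring_ihom_zero_implies_tensor_zero
    {𝒞 : Type*} [Category 𝒞] [MonoidalCategory 𝒞] [SymmetricCategory 𝒞] [MonoidalClosed 𝒞]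
    (C : 𝒞) (ε : C ⟶ 𝟙_ 𝒞) (Δ : C ⟶ C ⊗ C)
    (hΔ : Δ ≫ (C ◁ ε) ≫ (ρ_ C).hom = 𝟙 C)
    (t : 𝒞) (ht : IsZero ((ihom C).obj t)) :
    IsZero (C ⊗ t) := by
  set Z := (ihom C).obj t with hZdef
  have hZ2 : IsZero (C ⊗ (C ⊗ Z)) := isZero_tensor_left C (isZero_tensor_left C ht)
  -- the "strip off C" map
  set e₁ : C ⊗ t ⟶ t := (ε ▷ t) ≫ (λ_ t).hom with he₁
  set m : t ⟶ Z := MonoidalClosed.curry e₁ with hmdef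
  have hm : (C ◁ m) ≫ (ihom.ev C).app t = e₁ := by
    rw [← MonoidalClosed.uncurry_eq]
    exact MonoidalClosed.uncurry_curry e₁
  -- the coring identity, whiskered by t
  have key : (Δ ▷ t) ≫ (α_ C C t).hom ≫ (C ◁ e₁) = 𝟙 (C ⊗ t) := by
    calc (Δ ▷ t) ≫ (α_ C C t).hom ≫ (C ◁ ((ε ▷ t) ≫ (λ_ t).hom))
        = (Δ ▷ t) ≫ (α_ C C t).hom ≫ (C ◁ (ε ▷ t)) ≫ (C ◁ (λ_ t).hom) := by
          rw [MonoidalCategory.whiskerLeft_comp]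
      _ = (Δ ▷ t) ≫ ((C ◁ ε) ▷ t) ≫ (α_ C (𝟙_ 𝒞) t).hom ≫ (C ◁ (λ_ t).hom) := by
          rw [associator_naturality_middle_assoc]
      _ = (Δ ▷ t) ≫ ((C ◁ ε) ▷ t) ≫ ((ρ_ C).hom ▷ t) := by
          rw [MonoidalCategory.triangle]
      _ = (Δ ≫ (C ◁ ε) ≫ (ρ_ C).hom) ▷ t := by
          rw [comp_whiskerRight, comp_whiskerRight]
      _ = 𝟙 (C ⊗ t) := by rw [hΔ, MonoidalCategory.id_whiskerRight]
  refine isZero_of_retract_zero hZ2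
    ((Δ ▷ t) ≫ (α_ C C t).hom ≫ (C ◁ (C ◁ m)))
    (C ◁ ((ihom.ev C).app t)) ?_
  calc ((Δ ▷ t) ≫ (α_ C C t).hom ≫ (C ◁ (C ◁ m))) ≫ (C ◁ ((ihom.ev C).app t))
      = (Δ ▷ t) ≫ (α_ C C t).hom ≫ (C ◁ ((C ◁ m) ≫ (ihom.ev C).app t)) := by
        rw [MonoidalCategory.whiskerLeft_comp]
        simp only [Category.assoc]
    _ = 𝟙 (C ⊗ t) := by rw [hm, key]
end

section
/- Let C be a weak coring in a symmetric monoidal closed category 𝒞, with counit ε : C ⟶ 𝟙 and comultiplication Δ : C ⟶ C ⊗ C. Then for every object t of 𝒞, the object C ⊗ t is a zero object if and only if the internal hom (ihom C).obj t is a zero object. -/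
open CategoryTheory CategoryTheory.Limits CategoryTheory.MonoidalCategory

theorem weak_coring_tensor_zero_iff_ihom_zero
    {𝒞 : Type*} [Category 𝒞] [MonoidalCategory 𝒞] [SymmetricCategory 𝒞] [MonoidalClosed 𝒞]
    (C : 𝒞) (ε : C ⟶ 𝟙_ 𝒞) (Δ : C ⟶ C ⊗ C)
    (hΔ : Δ ≫ (C ◁ ε) ≫ (ρ_ C).hom = 𝟙 C)
    (t : 𝒞) :
    IsZero (C ⊗ t) ↔ IsZero ((ihom C).obj t) := by
  set Ft := (ihom C).obj t with hFt
  set εt : C ⊗ t ⟶ t := (ε ▷ t) ≫ (λ_ t).hom with hεt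
  set u : t ⟶ Ft := MonoidalClosed.curry εt with hu
  set ev : C ⊗ Ft ⟶ t := (ihom.ev C).app t with hev
  -- coherence: (Δ ▷ t) ≫ α ≫ (C ◁ εt) = 𝟙
  have key : (Δ ▷ t) ≫ (α_ C C t).hom ≫ (C ◁ εt) = 𝟙 (C ⊗ t) := by
    rw [hεt, MonoidalCategory.whiskerLeft_comp,
      ← MonoidalCategory.associator_naturality_middle_assoc,
      MonoidalCategory.triangle, ← comp_whiskerRight_assoc, ← comp_whiskerRight]
    rw [Category.assoc, hΔ, id_whiskerRight]
  -- C ⊗ t is a retract of C ⊗ Ft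
  have hret1 : (C ◁ u) ≫ (Δ ▷ Ft) ≫ (α_ C C Ft).hom ≫ (C ◁ ev) = 𝟙 (C ⊗ t) := by
    rw [MonoidalCategory.whisker_exchange_assoc,
      MonoidalCategory.associator_naturality_right_assoc,
      ← MonoidalCategory.whiskerLeft_comp]
    have : (C ◁ u) ≫ ev = εt := by
      rw [hev, hu, ← MonoidalClosed.uncurry_eq, MonoidalClosed.uncurry_curry]
    rw [this, key]
  -- Ft is a retract of (ihom C).obj (C ⊗ t)
  have hΔ' : (Δ ≫ (β_ C C).hom) ≫ (ε ▷ C) ≫ (λ_ C).hom = 𝟙 C := by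
    rw [Category.assoc, ← BraidedCategory.braiding_naturality_right_assoc,
      braiding_leftUnitor]
    exact hΔ
  set s : Ft ⟶ (ihom C).obj (C ⊗ t) :=
    MonoidalClosed.curry (((Δ ≫ (β_ C C).hom) ▷ Ft) ≫ (α_ C C Ft).hom ≫ (C ◁ ev)) with hs
  have hret2 : s ≫ (ihom C).map εt = 𝟙 Ft := by
    rw [hs, ← MonoidalClosed.curry_natural_right]
    have : (((Δ ≫ (β_ C C).hom) ▷ Ft) ≫ (α_ C C Ft).hom ≫ (C ◁ ev)) ≫ εt = ev := by
      rw [hεt, Category.assoc, Category.assoc,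
        MonoidalCategory.whisker_exchange_assoc,
        MonoidalCategory.leftUnitor_naturality,
        ← MonoidalCategory.associator_naturality_left_assoc,
        MonoidalCategory.leftUnitor_tensor_hom]
      simp only [Category.assoc, Iso.hom_inv_id_assoc]
      rw [← comp_whiskerRight_assoc, ← comp_whiskerRight_assoc, Category.assoc, hΔ',
        id_whiskerRight, Category.id_comp]
    rw [this, hev, ← MonoidalClosed.uncurry_id_eq_ev, MonoidalClosed.curry_uncurry]
  constructor
  · intro h
    have huniq : ∀ {Y : 𝒞} (f g : Y ⟶ Ft), f = g := by
      intro Y f g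
      have h1 : f ≫ s = g ≫ s :=
        MonoidalClosed.uncurry_injective
          (h.eq_of_tgt (MonoidalClosed.uncurry (f ≫ s)) (MonoidalClosed.uncurry (g ≫ s)))
      calc f = (f ≫ s) ≫ (ihom C).map εt := by rw [Category.assoc, hret2, Category.comp_id]
        _ = (g ≫ s) ≫ (ihom C).map εt := by rw [h1]
        _ = g := by rw [Category.assoc, hret2, Category.comp_id]
    exact h.of_iso ⟨h.from_ Ft, h.to_ Ft, huniq _ _, h.eq_of_src _ _⟩
  · intro h
    have huniq : ∀ {Y : 𝒞} (f g : C ⊗ t ⟶ Y), f = g := by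
      intro Y f g
      have h1 : ((Δ ▷ Ft) ≫ (α_ C C Ft).hom ≫ (C ◁ ev)) ≫ f
          = ((Δ ▷ Ft) ≫ (α_ C C Ft).hom ≫ (C ◁ ev)) ≫ g :=
        MonoidalClosed.curry_injective (h.eq_of_src _ _)
      calc f = (C ◁ u) ≫ ((Δ ▷ Ft) ≫ (α_ C C Ft).hom ≫ (C ◁ ev)) ≫ f := by
              rw [← Category.assoc, ← Category.assoc, ← Category.assoc]
              rw [← Category.assoc, ← Category.assoc] at hret1
              rw [hret1, Category.id_comp]
        _ = (C ◁ u) ≫ ((Δ ▷ Ft) ≫ (α_ C C Ft).hom ≫ (C ◁ ev)) ≫ g := by rw [h1]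
        _ = g := by
              rw [← Category.assoc, ← Category.assoc, ← Category.assoc]
              rw [← Category.assoc, ← Category.assoc] at hret1
              rw [hret1, Category.id_comp]
    exact h.of_iso ⟨h.from_ (C ⊗ t), h.to_ (C ⊗ t), huniq _ _, h.eq_of_src _ _⟩
end

section
/- Let C be a weak coring in a symmetric monoidal closed category 𝒞, with counit ε : C ⟶ 𝟙 and comultiplication Δ : C ⟶ C ⊗ C. Then for every object t of 𝒞, the internal hom (ihom C).obj t is a retract of the internal hom (ihom (C ⊗ C)).obj (t ⊗ C), i.e. there exist morphisms i : (ihom C).obj t ⟶ (ihom (C ⊗ C)).obj (t ⊗ C) and r : (ihom (C ⊗ C)).obj (t ⊗ C) ⟶ (ihom C).obj t with i ≫ r = 𝟙. -/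
open CategoryTheory CategoryTheory.Limits CategoryTheory.MonoidalCategory

theorem weak_coring_ihom_retract
    {𝒞 : Type*} [Category 𝒞] [MonoidalCategory 𝒞] [SymmetricCategory 𝒞] [MonoidalClosed 𝒞]
    (C : 𝒞) (ε : C ⟶ 𝟙_ 𝒞) (Δ : C ⟶ C ⊗ C)
    (hΔ : Δ ≫ (C ◁ ε) ≫ (ρ_ C).hom = 𝟙 C)
    (t : 𝒞) :
    ∃ (i : (ihom C).obj t ⟶ (ihom (C ⊗ C)).obj (t ⊗ C))
      (r : (ihom (C ⊗ C)).obj (t ⊗ C) ⟶ (ihom C).obj t),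
      i ≫ r = 𝟙 ((ihom C).obj t) := by
  set H := (ihom C).obj t with hH
  refine ⟨MonoidalClosed.curry (((β_ C C).hom ▷ H) ≫ (α_ C C H).hom ≫
      (C ◁ (ihom.ev C).app t) ≫ (β_ C t).hom),
    MonoidalClosed.curry ((Δ ▷ _) ≫ (ihom.ev (C ⊗ C)).app (t ⊗ C) ≫ (t ◁ ε) ≫ (ρ_ t).hom), ?_⟩
  apply MonoidalClosed.uncurry_injective
  rw [MonoidalClosed.uncurry_natural_left, MonoidalClosed.uncurry_curry,
    MonoidalClosed.uncurry_id_eq_ev]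
  rw [MonoidalCategory.whisker_exchange_assoc]
  have h2 : (C ⊗ C) ◁ (MonoidalClosed.curry (((β_ C C).hom ▷ H) ≫ (α_ C C H).hom ≫
      (C ◁ (ihom.ev C).app t) ≫ (β_ C t).hom)) ≫ (ihom.ev (C ⊗ C)).app (t ⊗ C) =
      ((β_ C C).hom ▷ H) ≫ (α_ C C H).hom ≫ (C ◁ (ihom.ev C).app t) ≫ (β_ C t).hom :=
    MonoidalClosed.uncurry_curry _
  rw [reassoc_of% h2]
  rw [BraidedCategory.braiding_naturality_right_assoc]
  rw [← MonoidalCategory.whisker_exchange_assoc]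
  rw [MonoidalCategory.rightUnitor_naturality]
  have key : Δ ▷ H ≫ (β_ C C).hom ▷ H ≫ (α_ C C H).hom ≫ (β_ C (C ⊗ H)).hom ≫
      (C ⊗ H) ◁ ε ≫ (ρ_ (C ⊗ H)).hom = 𝟙 (C ⊗ H) := by
    rw [BraidedCategory.braiding_tensor_right_hom]
    simp only [Category.assoc, Iso.hom_inv_id_assoc, ← MonoidalCategory.comp_whiskerRight_assoc,
      SymmetricCategory.symmetry, MonoidalCategory.id_whiskerRight, Category.id_comp]
    rw [← MonoidalCategory.associator_inv_naturality_right_assoc]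
    rw [← MonoidalCategory.whiskerLeft_comp_assoc, ← BraidedCategory.braiding_naturality_left]
    rw [MonoidalCategory.whiskerLeft_comp, Category.assoc,
      ← MonoidalCategory.associator_naturality_middle_assoc,
      ← MonoidalCategory.comp_whiskerRight_assoc]
    have tail : (α_ C (𝟙_ 𝒞) H).hom ≫ C ◁ (β_ (𝟙_ 𝒞) H).hom ≫ (α_ C H (𝟙_ 𝒞)).inv ≫
        (ρ_ (C ⊗ H)).hom = (ρ_ C).hom ▷ H := by
      rw [braiding_tensorUnit_left]
      monoidal
    rw [tail, ← MonoidalCategory.comp_whiskerRight, Category.assoc, hΔ,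
      MonoidalCategory.id_whiskerRight]
  rw [reassoc_of% key]
end
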